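/- Let S be a semigroup and a, b group elements with a H b and a ∼ₚ b. Then there exists h in the group H-class H_a such that a = h⁻¹ b h, where h⁻¹ is the inverse of h in H_a. -/
import Mathlib


variable {S : Type*} [Semigroup S]

/-- Primary conjugacy: `a = x*y` and `b = y*x` for some `x, y`. -/
def PConj (a b : S) : Prop := ∃ x y : S, a = x * y ∧ b = y * x

/-- Conjugacy: the transitive closure of primary conjugacy. -/
def SConj : S → S → Prop := Relation.TransGen PConj

/-- `pw a n` is `a ^ n` for `n ≥ 1` (with junk value `a` at `n = 0`). -/
def pw (a : S) : ℕ → S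
  | 0 => a
  | 1 => a
  | n + 2 => pw a (n + 1) * a

/-- An element is a group element iff it lies in some subgroup of `S`:
there is an idempotent `e` acting as identity on `a`, and an inverse of `a`
relative to `e`. -/
def IsGroupElement (a : S) : Prop :=
  ∃ e b : S, e * e = e ∧ e * a = a ∧ a * e = a ∧ a * b = e ∧ b * a = e

/-- An element is group-bound if some positive power is a group element. -/
def GroupBound (a : S) : Prop := ∃ n : ℕ, 1 ≤ n ∧ IsGroupElement (pw a n)

/-- Green's L-relation: same principal left ideal in `S¹`. -/
def LRel (a b : S) : Prop :=
  (∃ u : WithOne S, u * (a : WithOne S) = (b : WithOne S)) ∧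
  (∃ u : WithOne S, u * (b : WithOne S) = (a : WithOne S))

/-- Green's R-relation: same principal right ideal in `S¹`. -/
def RRel (a b : S) : Prop :=
  (∃ u : WithOne S, (a : WithOne S) * u = (b : WithOne S)) ∧
  (∃ u : WithOne S, (b : WithOne S) * u = (a : WithOne S))

/-- Green's H-relation. -/
def HRel (a b : S) : Prop := LRel a b ∧ RRel a b

/-- Green's D-relation. -/
def DRel (a b : S) : Prop := ∃ c : S, LRel a c ∧ RRel c b

private lemma mmc {T : Type*} [Semigroup T] {u v w : T} (h : u * v = w) (z : T) :
    u * (v * z) = w * z := by rw [← mul_assoc, h]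

theorem pconj_in_group_HClass (a b : S)
    (ha : IsGroupElement a) (hH : HRel a b) (h : PConj a b) :
    ∃ e h h' : S, e * e = e ∧ HRel e a ∧ HRel h a ∧ HRel h' a ∧
      h * h' = e ∧ h' * h = e ∧ a = h' * b * h := by
  obtain ⟨x, y, hx, hy⟩ := h
  obtain ⟨e, c₀, hee, hea, hae, hac₀, hc₀a⟩ := ha
  set a' : S := e * c₀ * e with ha'def
  -- basic S identities
  have haa' : a * a' = e := by
    rw [ha'def, ← mul_assoc, ← mul_assoc, hae, hac₀, hee]
  have ha'a : a' * a = e := by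
    rw [ha'def, mul_assoc, mul_assoc, hea, hc₀a, hee]
  have hea' : e * a' = a' := by
    rw [ha'def, ← mul_assoc, ← mul_assoc, hee]
  have ha'e : a' * e = a' := by
    rw [ha'def, mul_assoc, mul_assoc, hee, ← mul_assoc]
  -- M = WithOne S
  obtain ⟨⟨⟨u₁, hu₁⟩, ⟨u₂, hu₂⟩⟩, ⟨⟨v₁, hv₁⟩, ⟨v₂, hv₂⟩⟩⟩ := hH
  have mee : (e : WithOne S) * e = e := by exact_mod_cast hee
  have mea : (e : WithOne S) * a = a := by exact_mod_cast hea
  have mae : (a : WithOne S) * e = a := by exact_mod_cast hae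
  have maa' : (a : WithOne S) * a' = e := by exact_mod_cast haa'
  have ma'a : (a' : WithOne S) * a = e := by exact_mod_cast ha'a
  have mea' : (e : WithOne S) * a' = a' := by exact_mod_cast hea'
  have mhx : (a : WithOne S) = x * y := by exact_mod_cast hx
  have mhy : (b : WithOne S) = y * x := by exact_mod_cast hy
  have mEB : (e : WithOne S) * b = b := by rw [← hv₁, ← mul_assoc, mea]
  have mBE : (b : WithOne S) * e = b := by rw [← hu₁, mul_assoc, mae]
  set B' : WithOne S := (e : WithOne S) * (v₂ * (a' : WithOne S)) with hB'def
  have mBRt : (b : WithOne S) * (v₂ * a') = e := by rw [← mul_assoc, hv₂, maa']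
  have mLB : ((a' : WithOne S) * u₂) * b = e := by rw [mul_assoc, hu₂, ma'a]
  have mBB' : (b : WithOne S) * B' = e := by
    rw [hB'def, ← mul_assoc, mBE, mBRt]
  have mB'eq : B' = ((a' : WithOne S) * u₂) * e := by
    have haux : ((a' : WithOne S) * u₂) * (b * (v₂ * a')) = e * (v₂ * a') := by
      rw [← mul_assoc, mLB]
    rw [hB'def, ← haux, mBRt]
  have mB'B : B' * (b : WithOne S) = e := by
    rw [mB'eq, mul_assoc, mEB, mLB]
  -- word identities
  have sw1 : x * (b * (b * (y * a))) = a * (a * (a * a)) := by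
    simp only [hx, hy, mul_assoc]
  have mHA : ((y : WithOne S) * a) * a = b * (y * a) := by
    simp only [mhx, mhy, mul_assoc]
  have mHK : ((y : WithOne S) * a) * ((x : WithOne S) * b) = b * (b * b) := by
    simp only [mhx, mhy, mul_assoc]
  have mHE : ((y : WithOne S) * a) * e = y * a := by rw [mul_assoc, mae]
  have mEH : (e : WithOne S) * (y * a) = y * a := by
    have hyab : (y : WithOne S) * a = b * y := by simp only [mhx, mhy, mul_assoc]
    rw [hyab, ← mul_assoc, mEB]
  -- conjugation lemma
  have mB'H : ((y : WithOne S) * a) * a' = B' * (y * a) := by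
    calc ((y : WithOne S) * a) * a'
        = ((e : WithOne S) * (y * a)) * a' := by rw [mEH]
      _ = ((B' * b) * (y * a)) * a' := by rw [mB'B]
      _ = B' * ((b * (y * a)) * a') := by simp only [mul_assoc]
      _ = B' * ((((y : WithOne S) * a) * a) * a') := by rw [mHA]
      _ = B' * ((y * a) * (a * a')) := by simp only [mul_assoc]
      _ = B' * ((y * a) * e) := by rw [maa']
      _ = B' * (y * a) := by rw [mHE]
  have l1 : ∀ z : WithOne S,
      ((y : WithOne S) * a) * (a' * z) = B' * (((y : WithOne S) * a) * z) := by
    intro z; rw [mmc mB'H z, mul_assoc]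
  -- h * h' = e and h' * h = e at M level
  have mHH' : ((y : WithOne S) * a) * (a' * (a' * (a' * (x * b)))) = e := by
    rw [l1, l1, l1, mHK]
    simp only [mmc mB'B, mmc mEB, mEB, mB'B]
  have mH'H : ((a' : WithOne S) * (a' * (a' * (x * b)))) * (y * a) = e := by
    have mw : (x : WithOne S) * (b * (y * a)) = a * (a * a) := by
      simp only [mhx, mhy, mul_assoc]
    simp only [mul_assoc]
    rw [mw]
    simp only [mmc ma'a, mmc mea, ma'a, mea]
  -- S-level consequences
  have sHH' : (y * a) * (a' * (a' * (a' * (x * b)))) = e := by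
    rw [← WithOne.coe_inj]; push_cast; exact mHH'
  have sH'H : (a' * (a' * (a' * (x * b)))) * (y * a) = e := by
    rw [← WithOne.coe_inj]; push_cast; exact mH'H
  have sFinal : a = (a' * (a' * (a' * (x * b)))) * b * (y * a) := by
    symm
    simp only [mul_assoc]
    rw [sw1]
    simp only [mmc ha'a, mmc hea, ha'a, hea]
  have mFinal : (a : WithOne S)
      = (((a' : WithOne S) * (a' * (a' * (x * b)))) * b) * (y * a) := by
    have := congrArg (fun t : S => (t : WithOne S)) sFinal
    push_cast at this
    exact this
  refine ⟨e, y * a, a' * (a' * (a' * (x * b))), hee, ?_, ?_, ?_, sHH', sH'H, sFinal⟩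
  · exact ⟨⟨⟨(a : WithOne S), by exact_mod_cast hae⟩,
        ⟨(a' : WithOne S), by exact_mod_cast ha'a⟩⟩,
      ⟨⟨(a : WithOne S), by exact_mod_cast hea⟩,
        ⟨(a' : WithOne S), by exact_mod_cast haa'⟩⟩⟩
  · -- HRel (y*a) a
    refine ⟨⟨⟨((a * (a' * (a' * (a' * (x * b)))) : S) : WithOne S), ?_⟩,
        ⟨(((y * a) * a' : S) : WithOne S), ?_⟩⟩,
      ⟨⟨(((a' * (a' * (a' * (x * b)))) * a : S) : WithOne S), ?_⟩,
        ⟨((a' * (y * a) : S) : WithOne S), ?_⟩⟩⟩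
    · push_cast
      rw [mul_assoc, mH'H, mae]
    · push_cast
      rw [mul_assoc, ma'a]
      exact mHE
    · push_cast
      rw [show ((y : WithOne S) * a) * (((a' : WithOne S) * (a' * (a' * (x * b)))) * a)
          = (((y : WithOne S) * a) * ((a' : WithOne S) * (a' * (a' * (x * b))))) * a by
            simp only [mul_assoc], mHH', mea]
    · push_cast
      rw [← mul_assoc, maa']
      exact mEH
  · -- HRel h' a
    refine ⟨⟨⟨((a * (y * a) : S) : WithOne S), ?_⟩,
        ⟨(((a' * (a' * (a' * (x * b)))) * a' : S) : WithOne S), ?_⟩⟩,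
      ⟨⟨((b * (y * a) : S) : WithOne S), ?_⟩,
        ⟨((a' * (a' * (a' * (a' * (x * b)))) : S) : WithOne S), ?_⟩⟩⟩
    · push_cast
      rw [mul_assoc, mHH', mae]
    · push_cast
      rw [mul_assoc, ma'a]
      simp only [mul_assoc, mBE]
    · push_cast
      rw [← mul_assoc]
      exact mFinal.symm
    · push_cast
      rw [mmc maa', mmc mea']
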